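/- Let X and Y be Banach spaces, K : X → Y a map, x₀ ∈ X, 0 < q < 1, B₀ > 0, and set η₀ = ‖K(x₀)‖. Let S be the closed ball in X of radius B₀η₀/(1−q) centered at x₀. Assume: (i) K is Fréchet differentiable at every point of S; (ii) K'(x₀) has a bounded linear right inverse B : Y → X (K'(x₀) ∘ B = id_Y) with ‖B‖ ≤ B₀; (iii) ‖K'(x₁) − K'(x₂)‖ ≤ q/B₀ for all x₁, x₂ ∈ S. Define the modified Newton sequence by x_{n+1} = x_n − B(K(x_n)). Then every x_n lies in S, the sequence converges to a point x* ∈ S with K(x*) = 0, and ‖x* − x_n‖ ≤ qⁿ η₀ B₀/(1−q) for all n. -/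

import Mathlib

/-- Theorem 2.6 (modified Newton–Kantorovich method): under the stated conditions all the
modified Newton iterates `x_{n+1} = x_n - B (K x_n)` stay in the ball `S`, converge to a
solution `x*` of `K x = 0` in `S`, and `‖x* - x_n‖ ≤ qⁿ η₀ B₀ / (1 - q)`. -/
theorem stmt_2 {X Y : Type*} [NormedAddCommGroup X] [NormedSpace ℝ X] [CompleteSpace X]
    [NormedAddCommGroup Y] [NormedSpace ℝ Y] [CompleteSpace Y]
    (K : X → Y) (K' : X → X →L[ℝ] Y) (x₀ : X) (q B₀ : ℝ)
    (hq0 : 0 < q) (hq1 : q < 1) (hB₀ : 0 < B₀)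
    (S : Set X) (hS : S = Metric.closedBall x₀ (B₀ * ‖K x₀‖ / (1 - q)))
    (hdiff : ∀ x ∈ S, HasFDerivAt K (K' x) x)
    (B : Y →L[ℝ] X) (hright : (K' x₀).comp B = ContinuousLinearMap.id ℝ Y)
    (hBnorm : ‖B‖ ≤ B₀)
    (hlip : ∀ x₁ ∈ S, ∀ x₂ ∈ S, ‖K' x₁ - K' x₂‖ ≤ q / B₀)
    (xs : ℕ → X) (hxs0 : xs 0 = x₀)
    (hxsrec : ∀ n, xs (n + 1) = xs n - B (K (xs n))) :
    (∀ n, xs n ∈ S) ∧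
      ∃ xstar ∈ S, K xstar = 0 ∧
        Filter.Tendsto xs Filter.atTop (nhds xstar) ∧
        ∀ n, ‖xstar - xs n‖ ≤ q ^ n * ‖K x₀‖ * B₀ / (1 - q) := by
  set η := ‖K x₀‖ with hηdef
  have hη0 : 0 ≤ η := norm_nonneg _
  have h1q : 0 < 1 - q := by linarith
  have hr0 : 0 ≤ B₀ * η / (1 - q) := by positivity
  have hx₀S : x₀ ∈ S := by rw [hS]; exact Metric.mem_closedBall_self hr0
  have hconv : Convex ℝ S := by rw [hS]; exact convex_closedBall _ _
  have hinv : ∀ y, K' x₀ (B y) = y := by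
    intro y
    have := ContinuousLinearMap.ext_iff.mp hright y
    simpa using this
  -- mean value estimate for g z = K z - K' x₀ z
  have hmvt : ∀ a ∈ S, ∀ b ∈ S,
      ‖(K b - K' x₀ b) - (K a - K' x₀ a)‖ ≤ (q / B₀) * ‖b - a‖ := by
    intro a ha b hb
    have := hconv.norm_image_sub_le_of_norm_hasFDerivWithin_le
      (f := fun z => K z - K' x₀ z) (f' := fun z => K' z - K' x₀) (C := q / B₀)
      (fun z hz => ((hdiff z hz).sub (K' x₀).hasFDerivAt).hasFDerivWithinAt)
      (fun z hz => hlip z hz x₀ hx₀S) ha hb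
    simpa using this
  have memS : ∀ (n : ℕ) (z : X),
      ‖z - x₀‖ ≤ (1 - q ^ n) / (1 - q) * (B₀ * η) → z ∈ S := by
    intro n z hz
    have hqn : 0 ≤ q ^ n := by positivity
    rw [hS, Metric.mem_closedBall, dist_eq_norm]
    calc ‖z - x₀‖ ≤ (1 - q ^ n) / (1 - q) * (B₀ * η) := hz
      _ ≤ 1 / (1 - q) * (B₀ * η) := by
          have h1 : 1 - q ^ n ≤ 1 := by linarith
          gcongr
      _ = B₀ * η / (1 - q) := by ring
  have key : ∀ n, ‖K (xs n)‖ ≤ q ^ n * η ∧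
      ‖xs n - x₀‖ ≤ (1 - q ^ n) / (1 - q) * (B₀ * η) := by
    intro n
    induction n with
    | zero => simp [hxs0]; exact hηdef.symm.le
    | succ n ih =>
      obtain ⟨hKn, hdn⟩ := ih
      have hqn : 0 ≤ q ^ n := by positivity
      have hmemn : xs n ∈ S := memS n _ hdn
      have hstep : ‖xs (n + 1) - xs n‖ ≤ B₀ * (q ^ n * η) := by
        have : xs (n + 1) - xs n = -(B (K (xs n))) := by rw [hxsrec n]; abel
        rw [this, norm_neg]
        calc ‖B (K (xs n))‖ ≤ ‖B‖ * ‖K (xs n)‖ := B.le_opNorm _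
          _ ≤ B₀ * (q ^ n * η) :=
            mul_le_mul hBnorm hKn (norm_nonneg _) hB₀.le
      have hdn1 : ‖xs (n + 1) - x₀‖ ≤ (1 - q ^ (n + 1)) / (1 - q) * (B₀ * η) := by
        have h1 : ‖xs (n + 1) - x₀‖ ≤ ‖xs (n + 1) - xs n‖ + ‖xs n - x₀‖ :=
          norm_sub_le_norm_sub_add_norm_sub _ _ _
        have h2 : B₀ * (q ^ n * η) + (1 - q ^ n) / (1 - q) * (B₀ * η)
            = (1 - q ^ (n + 1)) / (1 - q) * (B₀ * η) := by
          field_simp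
          ring
        linarith [add_le_add hstep hdn]
      have hmemn1 : xs (n + 1) ∈ S := memS (n + 1) _ hdn1
      refine ⟨?_, hdn1⟩
      have hrepr : K (xs (n + 1)) =
          (K (xs (n + 1)) - K' x₀ (xs (n + 1))) - (K (xs n) - K' x₀ (xs n)) := by
        have h1 : K' x₀ (xs (n + 1)) = K' x₀ (xs n) - K (xs n) := by
          rw [hxsrec n, map_sub, hinv]
        rw [h1]; abel
      calc ‖K (xs (n + 1))‖
          = ‖(K (xs (n + 1)) - K' x₀ (xs (n + 1))) - (K (xs n) - K' x₀ (xs n))‖ := by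
            rw [← hrepr]
        _ ≤ (q / B₀) * ‖xs (n + 1) - xs n‖ := hmvt _ hmemn _ hmemn1
        _ ≤ (q / B₀) * (B₀ * (q ^ n * η)) := by
            apply mul_le_mul_of_nonneg_left hstep (by positivity)
        _ = q ^ (n + 1) * η := by field_simp; ring
  have hmem : ∀ n, xs n ∈ S := fun n => memS n _ (key n).2
  have hdist : ∀ n, dist (xs n) (xs (n + 1)) ≤ (B₀ * η) * q ^ n := by
    intro n
    rw [dist_eq_norm, hxsrec n]
    have : xs n - (xs n - B (K (xs n))) = B (K (xs n)) := by abel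
    rw [this]
    calc ‖B (K (xs n))‖ ≤ ‖B‖ * ‖K (xs n)‖ := B.le_opNorm _
      _ ≤ B₀ * (q ^ n * η) :=
        mul_le_mul hBnorm (key n).1 (norm_nonneg _) hB₀.le
      _ = (B₀ * η) * q ^ n := by ring
  have hcauchy : CauchySeq xs := cauchySeq_of_le_geometric q (B₀ * η) hq1 hdist
  obtain ⟨xstar, hxstar⟩ := cauchySeq_tendsto_of_complete hcauchy
  have hSclosed : IsClosed S := by rw [hS]; exact Metric.isClosed_closedBall
  have hxstarS : xstar ∈ S :=
    hSclosed.mem_of_tendsto hxstar (Filter.Eventually.of_forall hmem)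
  have hKlim : Filter.Tendsto (fun n => K (xs n)) Filter.atTop (nhds (K xstar)) :=
    ((hdiff xstar hxstarS).continuousAt.tendsto).comp hxstar
  have hK0 : Filter.Tendsto (fun n => K (xs n)) Filter.atTop (nhds 0) := by
    apply squeeze_zero_norm (fun n => (key n).1)
    have := (tendsto_pow_atTop_nhds_zero_of_lt_one hq0.le hq1).mul_const η
    simpa using this
  have hKxstar : K xstar = 0 := tendsto_nhds_unique hKlim hK0
  refine ⟨hmem, xstar, hxstarS, hKxstar, hxstar, fun n => ?_⟩
  have hb := dist_le_of_le_geometric_of_tendsto q (B₀ * η) hq1 hdist hxstar n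
  calc ‖xstar - xs n‖ = dist (xs n) xstar := by rw [dist_eq_norm, norm_sub_rev]
    _ ≤ (B₀ * η) * q ^ n / (1 - q) := hb
    _ = q ^ n * η * B₀ / (1 - q) := by ring
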